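/- Let B, B' be sets equipped with maps εᵢ, φᵢ : B (resp. B') → ℕ and partial maps ẽᵢ, and define the tensor action on B × B' by ẽᵢ(b, b') = (ẽᵢ b, b') if φᵢ(b) ≥ εᵢ(b') and (b, ẽᵢ b') if φᵢ(b) < εᵢ(b'). Let ω be a map from B (resp. B') into sets C, C' with analogous data ε'ᵢ, φ'ᵢ, ẽ'ᵢ, and suppose for a fixed index i and constant c ≥ 1: (a) ω(ẽᵢ b) = (ẽ'ᵢ)^c ω(b) for all b where ẽᵢ b is defined, (b) φ'ᵢ(ω b) = c·φᵢ(b) and ε'ᵢ(ω b) = c·εᵢ(b), and (c) applying ẽ'ᵢ to (ω b, ω b') any number of times up to c does not change which tensor factor is acted on (i.e., φ'ᵢ of the first factor stays ≥ or stays < ε'ᵢ of the second throughout). Then ω(ẽᵢ(b, b')) = (ẽ'ᵢ)^c (ω b, ω b') whenever ẽᵢ(b,b') is defined, where ω acts componentwise on pairs. -/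
import Mathlib


/-- `k`-fold application of a partial map (encoded via `Option`). -/
def stepOpt {α : Type*} (e : α → Option α) (k : ℕ) (x : Option α) : Option α :=
  (fun o => o.bind e)^[k] x

lemma stepOpt_succ' {α : Type*} (e : α → Option α) (k : ℕ) (x : Option α) :
    stepOpt e (k + 1) x = (stepOpt e k x).bind e :=
  Function.iterate_succ_apply' _ _ _

/-- The tensor-product action of a crystal operator on a pair, following the
signature rule: act on the first factor if `φ(b) ≥ ε(b')`, otherwise on the
second. -/
def tensorE {α β : Type*} (φ : α → ℕ) (ε : β → ℕ)
    (e : α → Option α) (e' : β → Option β) (p : α × β) : Option (α × β) :=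
  if ε p.2 ≤ φ p.1 then (e p.1).map (fun a => (a, p.2))
  else (e' p.2).map (fun b => (p.1, b))

/-- Abstract form of Lemma 2: if `ω` intertwines `ẽᵢ` with `(ẽ'ᵢ)^c` on each
factor, scales `φᵢ`, `εᵢ` by `c ≥ 1`, and the side of the tensor rule is
stable along the first `c` applications of `ẽ'ᵢ`, then `ω` (acting
componentwise) intertwines the tensor actions: `ω(ẽᵢ(b,b')) = (ẽ'ᵢ)^c (ωb, ωb')`. -/
theorem stmt_7 {B B' C C' : Type*}
    (εB φB : B → ℕ) (εB' φB' : B' → ℕ)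
    (eB : B → Option B) (eB' : B' → Option B')
    (εC φC : C → ℕ) (εC' φC' : C' → ℕ)
    (eC : C → Option C) (eC' : C' → Option C')
    (ω : B → C) (ω' : B' → C') (c : ℕ) (hc : 1 ≤ c)
    (ha : ∀ (b : B) (b₂ : B), eB b = some b₂ →
      stepOpt eC c (some (ω b)) = some (ω b₂))
    (ha' : ∀ (b' : B') (b₂' : B'), eB' b' = some b₂' →
      stepOpt eC' c (some (ω' b')) = some (ω' b₂'))
    (hb : ∀ b : B, φC (ω b) = c * φB b ∧ εC (ω b) = c * εB b)
    (hb' : ∀ b' : B', φC' (ω' b') = c * φB' b' ∧ εC' (ω' b') = c * εB' b')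
    (hstay : ∀ (b : B) (b' : B') (k : ℕ), k < c → ∀ p : C × C',
      stepOpt (tensorE φC εC' eC eC') k (some (ω b, ω' b')) = some p →
      (εC' p.2 ≤ φC p.1 ↔ εC' (ω' b') ≤ φC (ω b))) :
    ∀ (b : B) (b' : B') (q : B × B'),
      tensorE φB εB' eB eB' (b, b') = some q →
      stepOpt (tensorE φC εC' eC eC') c (some (ω b, ω' b')) =
        some (ω q.1, ω' q.2) := by
  intro b b' q hq
  set T := tensorE φC εC' eC eC' with hT
  by_cases hside : εB' b' ≤ φB b
  · -- act on first factor
    have hsideC : εC' (ω' b') ≤ φC (ω b) := by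
      rw [(hb' b').2, (hb b).1]
      exact Nat.mul_le_mul_left c hside
    obtain ⟨b₂, hb₂⟩ : ∃ b₂, eB b = some b₂ := by
      simp only [tensorE, hside, if_pos] at hq
      rcases h : eB b with _ | b₂
      · rw [h] at hq; simp at hq
      · exact ⟨b₂, rfl⟩
    have hq' : q = (b₂, b') := by
      simp only [tensorE, hside, if_pos, hb₂] at hq
      simpa using hq.symm
    have key : ∀ k, k ≤ c →
        stepOpt T k (some (ω b, ω' b')) =
          (stepOpt eC k (some (ω b))).map (fun a => (a, ω' b')) := by
      intro k hk
      induction k with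
      | zero => simp [stepOpt]
      | succ k ih =>
        have hk' : k < c := Nat.lt_of_succ_le hk
        rw [stepOpt_succ', stepOpt_succ', ih hk'.le]
        rcases h : stepOpt eC k (some (ω b)) with _ | a
        · simp
        · have hp : stepOpt T k (some (ω b, ω' b')) = some (a, ω' b') := by
            rw [ih hk'.le, h]; rfl
          have hside' : εC' (ω' b') ≤ φC a :=
            (hstay b b' k hk' (a, ω' b') hp).2 hsideC
          simp only [Option.map_some, Option.bind_some, hT, tensorE, hside', if_pos]
    rw [key c le_rfl, ha b b₂ hb₂, hq']; rfl
  · -- act on second factor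
    push_neg at hside
    have hsideC : ¬ εC' (ω' b') ≤ φC (ω b) := by
      rw [(hb' b').2, (hb b).1]
      intro h
      exact absurd (Nat.le_of_mul_le_mul_left h hc) (not_le.mpr hside)
    have hside0 : ¬ εB' b' ≤ φB b := not_le.mpr hside
    obtain ⟨b₂, hb₂⟩ : ∃ b₂, eB' b' = some b₂ := by
      simp only [tensorE, hside0, if_neg, if_false] at hq
      rcases h : eB' b' with _ | b₂
      · rw [h] at hq; simp at hq
      · exact ⟨b₂, rfl⟩
    have hq' : q = (b, b₂) := by
      simp only [tensorE, hside0, if_neg, if_false, hb₂] at hq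
      simpa using hq.symm
    have key : ∀ k, k ≤ c →
        stepOpt T k (some (ω b, ω' b')) =
          (stepOpt eC' k (some (ω' b'))).map (fun a => (ω b, a)) := by
      intro k hk
      induction k with
      | zero => simp [stepOpt]
      | succ k ih =>
        have hk' : k < c := Nat.lt_of_succ_le hk
        rw [stepOpt_succ', stepOpt_succ', ih hk'.le]
        rcases h : stepOpt eC' k (some (ω' b')) with _ | a
        · simp
        · have hp : stepOpt T k (some (ω b, ω' b')) = some (ω b, a) := by
            rw [ih hk'.le, h]; rfl
          have hside' : ¬ εC' a ≤ φC (ω b) := fun hle =>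
            hsideC ((hstay b b' k hk' (ω b, a) hp).1 hle)
          simp only [Option.map_some, Option.bind_some, hT, tensorE, hside', if_neg,
            if_false]
    rw [key c le_rfl, ha' b' b₂ hb₂, hq']; rfl
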